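/- Every monoidal category is monoidally equivalent to a strict monoidal category (Strictification Theorem). -/

import Mathlib

open CategoryTheory MonoidalCategory
universe v u

namespace Strictify
variable (C : Type u) [Category.{v} C] [MonoidalCategory C]

structure Obj : Type max u v where
  as : List C

variable {C}

def π : List C → C
  | [] => 𝟙_ C
  | X :: L => X ⊗ π L

attribute [reducible] π

@[simp] lemma π_nil : π ([] : List C) = 𝟙_ C := rfl
@[simp] lemma π_cons (X : C) (L : List C) : π (X :: L) = X ⊗ π L := rfl

def φ : (L L' : List C) → π (L ++ L') ≅ π L ⊗ π L'
  | [], L' => (λ_ (π L')).symm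
  | X :: L, L' => whiskerLeftIso X (φ L L') ≪≫ (α_ X (π L) (π L')).symm

@[simp] lemma φ_nil (L : List C) : φ [] L = (λ_ (π L)).symm := rfl
@[simp] lemma φ_cons (X : C) (L L' : List C) :
    φ (X :: L) L' = whiskerLeftIso X (φ L L') ≪≫ (α_ X (π L) (π L')).symm := rfl

lemma φ_nil_right (L : List C) :
    (φ L []).hom ≫ (ρ_ (π L)).hom = eqToHom (by rw [List.append_nil]) := by
  induction L with
  | nil => simp [← unitors_equal]
  | cons X L ih =>
    simp only [φ_cons, Iso.trans_hom, whiskerLeftIso_hom, Iso.symm_hom, Category.assoc,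
      π_cons, π_nil]
    rw [show (ρ_ (X ⊗ π L)).hom = (α_ X (π L) (𝟙_ C)).hom ≫ X ◁ (ρ_ (π L)).hom from
      rightUnitor_tensor_hom X (π L)]
    rw [Iso.inv_hom_id_assoc, ← MonoidalCategory.whiskerLeft_comp, ih,
      whiskerLeft_eqToHom]

lemma φ_assoc (L₁ L₂ L₃ : List C) :
    (φ (L₁ ++ L₂) L₃).hom ≫ ((φ L₁ L₂).hom ▷ π L₃) ≫ (α_ (π L₁) (π L₂) (π L₃)).hom =
      eqToHom (by rw [List.append_assoc]) ≫ (φ L₁ (L₂ ++ L₃)).hom ≫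
        (π L₁ ◁ (φ L₂ L₃).hom) := by
  induction L₁ with
  | nil =>
    simp only [List.nil_append, φ_nil, Iso.symm_hom, eqToHom_refl, Category.id_comp, π_nil]
    rw [← leftUnitor_tensor_inv, leftUnitor_inv_naturality]
  | cons X L₁ ih =>
    simp only [List.cons_append, φ_cons, Iso.trans_hom, whiskerLeftIso_hom, Iso.symm_hom,
      Category.assoc, π_cons]
    rw [MonoidalCategory.comp_whiskerRight, Category.assoc,
      ← associator_inv_naturality_middle_assoc, pentagon_inv_inv_hom_hom_inv,
      ← MonoidalCategory.whiskerLeft_comp_assoc, ← MonoidalCategory.whiskerLeft_comp_assoc,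
      Category.assoc (φ (L₁ ++ L₂) L₃).hom ((φ L₁ L₂).hom ▷ π L₃)
        (α_ (π L₁) (π L₂) (π L₃)).hom, ih]
    simp only [MonoidalCategory.whiskerLeft_comp, Category.assoc, whiskerLeft_eqToHom,
      eqToHom_trans_assoc]
    rw [associator_inv_naturality_right]

end Strictify

namespace Strictify
variable (C : Type u) [Category.{v} C] [MonoidalCategory C]

/-- Morphisms in the strictification. -/
@[ext]
structure Hom (L L' : Obj C) : Type max u v where
  hom : π L.as ⟶ π L'.as

instance : Category.{max u v} (Obj C) where
  Hom := Hom C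
  id L := ⟨𝟙 (π L.as)⟩
  comp f g := ⟨f.hom ≫ g.hom⟩

variable {C}

@[simp] lemma id_hom (L : Obj C) : Hom.hom (𝟙 L) = 𝟙 (π L.as) := rfl
@[simp] lemma comp_hom {L L' L'' : Obj C} (f : L ⟶ L') (g : L' ⟶ L'') :
    (f ≫ g).hom = f.hom ≫ g.hom := rfl

@[ext] lemma hom_ext {L L' : Obj C} (f g : L ⟶ L') (h : f.hom = g.hom) : f = g :=
  Hom.ext h

omit [Category.{v, u} C] [MonoidalCategory C] in
lemma obj_eq_of_as {L L' : Obj C} (h : L.as = L'.as) : L = L' := by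
  cases L; cases L'; cases h; rfl

lemma eqToHom_hom {L L' : Obj C} (h : L = L') :
    (eqToHom h).hom = eqToHom (by rw [h]) := by subst h; rfl

variable (C)

instance : MonoidalCategoryStruct (Obj C) where
  tensorObj L L' := ⟨L.as ++ L'.as⟩
  tensorHom f g := ⟨(φ _ _).hom ≫ (f.hom ⊗ₘ g.hom) ≫ (φ _ _).inv⟩
  whiskerLeft L _ _ f := ⟨(φ _ _).hom ≫ (𝟙 (π L.as) ⊗ₘ f.hom) ≫ (φ _ _).inv⟩
  whiskerRight f L := ⟨(φ _ _).hom ≫ (f.hom ⊗ₘ 𝟙 (π L.as)) ≫ (φ _ _).inv⟩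
  tensorUnit := ⟨[]⟩
  associator L₁ L₂ L₃ := eqToIso (by simp [List.append_assoc])
  leftUnitor L := eqToIso rfl
  rightUnitor L := eqToIso (by simp [List.append_nil])

variable {C}

@[simp] lemma tensorObj_as (L L' : Obj C) : (L ⊗ L').as = L.as ++ L'.as := rfl
@[simp] lemma tensorHom_hom {L₁ L₁' L₂ L₂' : Obj C} (f : L₁ ⟶ L₁') (g : L₂ ⟶ L₂') :
    (f ⊗ₘ g).hom = (φ _ _).hom ≫ (f.hom ⊗ₘ g.hom) ≫ (φ _ _).inv := rfl
@[simp] lemma unit_as : (𝟙_ (Obj C)).as = [] := rfl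

@[simp] lemma whiskerLeft_hom (L : Obj C) {M M' : Obj C} (f : M ⟶ M') :
    (L ◁ f).hom = (φ _ _).hom ≫ (𝟙 (π L.as) ⊗ₘ f.hom) ≫ (φ _ _).inv := rfl
@[simp] lemma whiskerRight_hom {M M' : Obj C} (f : M ⟶ M') (L : Obj C) :
    (f ▷ L).hom = (φ _ _).hom ≫ (f.hom ⊗ₘ 𝟙 (π L.as)) ≫ (φ _ _).inv := rfl

lemma tensorHom_eqToHom {L₁ L₁' L₂ L₂' : Obj C} (h₁ : L₁ = L₁') (h₂ : L₂ = L₂') :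
    (eqToHom h₁ ⊗ₘ eqToHom h₂) = eqToHom (by rw [h₁, h₂]) := by
  subst h₁; subst h₂
  ext
  simp [eqToHom_hom]


lemma eqToHom_tensorHom_id {L₁ L₁' : Obj C} (h : L₁ = L₁') (L₂ : Obj C) :
    (eqToHom h ⊗ₘ 𝟙 L₂) = eqToHom (by rw [h]) := by
  subst h; ext; simp [eqToHom_hom]

lemma id_tensorHom_eqToHom (L₁ : Obj C) {L₂ L₂' : Obj C} (h : L₂ = L₂') :
    (𝟙 L₁ ⊗ₘ eqToHom h) = eqToHom (by rw [h]) := by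
  subst h; ext; simp [eqToHom_hom]

lemma assoc_hom_eq (L₁ L₂ L₃ : Obj C) :
    (α_ L₁ L₂ L₃).hom = eqToHom (obj_eq_of_as (by simp [List.append_assoc])) := rfl
lemma lu_hom_eq (L : Obj C) : (λ_ L).hom = eqToHom rfl := rfl
lemma ru_hom_eq (L : Obj C) : (ρ_ L).hom = eqToHom (obj_eq_of_as (by simp [List.append_nil])) := rfl

@[simp] lemma lu_hom_hom (L : Obj C) : (λ_ L).hom.hom = 𝟙 (π L.as) := rfl
lemma ru_hom_hom (L : Obj C) :
    (ρ_ L).hom.hom = eqToHom (by rw [tensorObj_as, unit_as, List.append_nil]) := by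
  rw [ru_hom_eq, eqToHom_hom]

lemma eqToHom_pi_assoc (L₁ L₂ L₃ : List C) :
    (eqToHom (show π ((L₁ ++ L₂) ++ L₃) = π (L₁ ++ (L₂ ++ L₃)) by
        rw [List.append_assoc]) : _) =
      (φ (L₁ ++ L₂) L₃).hom ≫ ((φ L₁ L₂).hom ▷ π L₃) ≫
        (α_ (π L₁) (π L₂) (π L₃)).hom ≫ (π L₁ ◁ (φ L₂ L₃).inv) ≫
        (φ L₁ (L₂ ++ L₃)).inv := by
  have h := φ_assoc L₁ L₂ L₃
  rw [← cancel_mono (φ L₁ (L₂ ++ L₃)).hom, ← cancel_mono (π L₁ ◁ (φ L₂ L₃).hom)]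
  simp only [Category.assoc, Iso.inv_hom_id, Category.comp_id, Iso.inv_hom_id_assoc,
    ← MonoidalCategory.whiskerLeft_comp]
  simpa using h.symm

lemma ru_hom_hom' (L : Obj C) :
    (ρ_ L).hom.hom = (φ L.as []).hom ≫ (ρ_ (π L.as)).hom := by
  rw [ru_hom_hom, φ_nil_right]

lemma assoc_hom_hom (L₁ L₂ L₃ : Obj C) :
    (α_ L₁ L₂ L₃).hom.hom =
      (φ (L₁.as ++ L₂.as) L₃.as).hom ≫ ((φ L₁.as L₂.as).hom ▷ π L₃.as) ≫
        (α_ (π L₁.as) (π L₂.as) (π L₃.as)).hom ≫ (π L₁.as ◁ (φ L₂.as L₃.as).inv) ≫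
        (φ L₁.as (L₂.as ++ L₃.as)).inv := by
  rw [assoc_hom_eq, eqToHom_hom, eqToHom_pi_assoc]

variable (C)

instance : MonoidalCategory (Obj C) := MonoidalCategory.ofTensorHom
  (id_tensorHom_id := by intros; ext; simp)
  (id_tensorHom := by intros; rfl)
  (tensorHom_id := by intros; rfl)
  (tensorHom_comp_tensorHom := by
    intros; ext
    simp [tensorHom_comp_tensorHom])
  (associator_naturality := by
    intro X₁ X₂ X₃ Y₁ Y₂ Y₃ f₁ f₂ f₃
    ext
    simp only [comp_hom, tensorHom_hom, assoc_hom_hom, tensorObj_as, Category.assoc,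
      Iso.inv_hom_id_assoc]
    rw [show ((φ X₁.as X₂.as).hom ≫ (f₁.hom ⊗ₘ f₂.hom) ≫ (φ Y₁.as Y₂.as).inv ⊗ₘ f₃.hom) =
        ((φ X₁.as X₂.as).hom ▷ π X₃.as) ≫ ((f₁.hom ⊗ₘ f₂.hom) ⊗ₘ f₃.hom) ≫
          ((φ Y₁.as Y₂.as).inv ▷ π Y₃.as) by
      simp only [← MonoidalCategory.tensorHom_id, ← MonoidalCategory.id_tensorHom,
        tensorHom_comp_tensorHom]; simp]
    rw [show (f₁.hom ⊗ₘ (φ X₂.as X₃.as).hom ≫ (f₂.hom ⊗ₘ f₃.hom) ≫ (φ Y₂.as Y₃.as).inv) =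
        (π X₁.as ◁ (φ X₂.as X₃.as).hom) ≫ (f₁.hom ⊗ₘ (f₂.hom ⊗ₘ f₃.hom)) ≫
          (π Y₁.as ◁ (φ Y₂.as Y₃.as).inv) by
      simp only [← MonoidalCategory.tensorHom_id, ← MonoidalCategory.id_tensorHom,
        tensorHom_comp_tensorHom]; simp]
    simp only [Category.assoc]
    rw [inv_hom_whiskerRight_assoc, associator_naturality_assoc]
    simp)
  (leftUnitor_naturality := by
    intro X Y f
    ext
    simp)
  (rightUnitor_naturality := by
    intro X Y f
    ext
    simp only [comp_hom, tensorHom_hom, ru_hom_hom, Category.assoc]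
    rw [← φ_nil_right, ← φ_nil_right]
    simp only [Iso.inv_hom_id_assoc, unit_as, id_hom]
    simp only [π_nil, MonoidalCategory.tensorHom_id]
    rw [rightUnitor_naturality]
    simp only [Category.assoc]
    )
  (pentagon := by
    intro W X Y Z
    simp only [assoc_hom_eq, eqToHom_tensorHom_id, id_tensorHom_eqToHom, eqToHom_trans])
  (triangle := by
    intro X Y
    simp only [assoc_hom_eq, lu_hom_eq, ru_hom_eq, eqToHom_tensorHom_id,
      id_tensorHom_eqToHom, eqToHom_trans])

/-- The strictification functor. -/
@[simps]
def F : C ⥤ Obj C where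
  obj X := ⟨[X]⟩
  map f := ⟨f ▷ 𝟙_ C⟩
  map_id X := by ext; simp
  map_comp f g := by ext; simp

attribute [reducible] F

instance : (F C).Faithful where
  map_injective {X Y f g} h := by
    have h' : f ▷ 𝟙_ C = g ▷ 𝟙_ C := congrArg Hom.hom h
    have : (ρ_ X).inv ≫ f ▷ 𝟙_ C ≫ (ρ_ Y).hom = (ρ_ X).inv ≫ g ▷ 𝟙_ C ≫ (ρ_ Y).hom := by
      rw [h']
    simpa using this

instance : (F C).Full where
  map_surjective {X Y} h :=
    ⟨(ρ_ X).inv ≫ h.hom ≫ (ρ_ Y).hom, by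
      ext
      simp only [F_map_hom]
      rw [← cancel_mono (ρ_ Y).hom, rightUnitor_naturality]
      simp⟩

instance : (F C).EssSurj where
  mem_essImage L :=
    ⟨π L.as, ⟨⟨⟨(ρ_ (π L.as)).hom⟩, ⟨(ρ_ (π L.as)).inv⟩, by ext; simp, by ext; simp⟩⟩⟩

instance : (F C).IsEquivalence where

set_option maxHeartbeats 1000000 in
/-- Core monoidal structure on `F`. -/
def FCore : (F C).CoreMonoidal where
  εIso := ⟨⟨(λ_ (𝟙_ C)).inv⟩, ⟨(λ_ (𝟙_ C)).hom⟩, by ext; simp, by ext; simp⟩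
  μIso X Y := ⟨⟨(α_ X Y (𝟙_ C)).inv⟩, ⟨(α_ X Y (𝟙_ C)).hom⟩, by ext; simp, by ext; simp⟩
  μIso_hom_natural_left := by
    intro X Y f X'
    ext
    simp only [comp_hom, whiskerLeft_hom, whiskerRight_hom, F_map_hom, F_obj_as,
      tensorHom_hom, φ_cons, φ_nil, Iso.trans_hom, whiskerLeftIso_hom, Iso.symm_hom,
      π_cons, π_nil, lu_hom_hom, ru_hom_hom, assoc_hom_hom, id_hom, Category.assoc]
    simp
  μIso_hom_natural_right := by
    intro X Y X' f
    ext
    simp only [comp_hom, whiskerLeft_hom, whiskerRight_hom, F_map_hom, F_obj_as,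
      tensorHom_hom, φ_cons, φ_nil, Iso.trans_hom, whiskerLeftIso_hom, Iso.symm_hom,
      π_cons, π_nil, lu_hom_hom, ru_hom_hom, assoc_hom_hom, id_hom, Category.assoc]
    simp
  associativity := by
    intro X Y Z
    ext
    simp only [comp_hom, whiskerLeft_hom, whiskerRight_hom, F_map_hom, F_obj_as,
      tensorHom_hom, tensorObj_as, List.cons_append, List.nil_append, List.append_nil,
      φ_cons, φ_nil, Iso.trans_hom, whiskerLeftIso_hom, Iso.symm_hom, Iso.trans_inv,
      whiskerLeftIso_inv, Iso.symm_inv, π_cons, π_nil, lu_hom_hom,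
      assoc_hom_hom, id_hom, unit_as, Category.assoc, ru_hom_hom']
    pure_coherence
  left_unitality := by
    intro X
    ext
    simp only [comp_hom, whiskerLeft_hom, whiskerRight_hom, F_map_hom, F_obj_as,
      tensorHom_hom, tensorObj_as, List.cons_append, List.nil_append, List.append_nil,
      φ_cons, φ_nil, Iso.trans_hom, whiskerLeftIso_hom, Iso.symm_hom, Iso.trans_inv,
      whiskerLeftIso_inv, Iso.symm_inv, π_cons, π_nil, lu_hom_hom,
      assoc_hom_hom, id_hom, unit_as, Category.assoc, ru_hom_hom']
    pure_coherence
  right_unitality := by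
    intro X
    ext
    simp only [comp_hom, whiskerLeft_hom, whiskerRight_hom, F_map_hom, F_obj_as,
      tensorHom_hom, tensorObj_as, List.cons_append, List.nil_append, List.append_nil,
      φ_cons, φ_nil, Iso.trans_hom, whiskerLeftIso_hom, Iso.symm_hom, Iso.trans_inv,
      whiskerLeftIso_inv, Iso.symm_inv, π_cons, π_nil, lu_hom_hom,
      assoc_hom_hom, id_hom, unit_as, Category.assoc, ru_hom_hom']
    pure_coherence

instance : (F C).Monoidal := (FCore C).toMonoidal

end Strictify

/-- A witness that a monoidal category `C` is monoidally equivalent to a strict monoidal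
category: a category `D` with a monoidal structure whose tensor product is strictly
associative and strictly unital (the associator and unitors are identities, i.e. `eqToHom`s),
together with a monoidal functor `C ⥤ D` which is an equivalence of categories. -/
structure Strictification (C : Type u) [Category.{v} C] [MonoidalCategory C] where
  D : Type (max u v)
  [catD : Category.{max u v} D]
  [monD : MonoidalCategory D]
  tensor_assoc : ∀ X Y Z : D, (X ⊗ Y) ⊗ Z = X ⊗ (Y ⊗ Z)
  unit_tensor : ∀ X : D, 𝟙_ D ⊗ X = X
  tensor_unit : ∀ X : D, X ⊗ 𝟙_ D = X
  associator_eq : ∀ X Y Z : D, (α_ X Y Z).hom = eqToHom (tensor_assoc X Y Z)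
  leftUnitor_eq : ∀ X : D, (λ_ X).hom = eqToHom (unit_tensor X)
  rightUnitor_eq : ∀ X : D, (ρ_ X).hom = eqToHom (tensor_unit X)
  F : C ⥤ D
  [monF : F.Monoidal]
  isEquiv : F.IsEquivalence

/-- Strictification Theorem: every monoidal category is monoidally
equivalent to a strict monoidal category. -/
theorem strictification (C : Type u) [Category.{v} C] [MonoidalCategory C] :
    Nonempty (Strictification C) := by
  exact ⟨{
    D := Strictify.Obj C
    tensor_assoc := fun X Y Z => Strictify.obj_eq_of_as (List.append_assoc X.as Y.as Z.as)
    unit_tensor := fun X => Strictify.obj_eq_of_as (List.nil_append X.as)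
    tensor_unit := fun X => Strictify.obj_eq_of_as (List.append_nil X.as)
    associator_eq := fun X Y Z => Strictify.assoc_hom_eq X Y Z
    leftUnitor_eq := fun X => Strictify.lu_hom_eq X
    rightUnitor_eq := fun X => Strictify.ru_hom_eq X
    F := Strictify.F C
    isEquiv := inferInstance }⟩
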